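/- If G is a connected k-regular graph on n ≥ 5 vertices with k ≥ 2, then R(G) := L(L(G)^c)^c is connected. -/

import Mathlib

open SimpleGraph Polynomial

noncomputable instance {V : Type*} [Finite V] {G : SimpleGraph V} {v : V} :
    Fintype (G.neighborSet v) := Fintype.ofFinite _

/-- The operation `R(G) = L(L(G)ᶜ)ᶜ`. -/
def RGraph {V : Type*} (G : SimpleGraph V) :
    SimpleGraph ((G.lineGraph)ᶜ.edgeSet) :=
  ((G.lineGraph)ᶜ.lineGraph)ᶜ

/-- Adjacency matrix over `ℝ` of a graph on a finite vertex type. -/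
noncomputable def adjM {V : Type*} [Fintype V] (G : SimpleGraph V) : Matrix V V ℝ :=
  letI := Classical.decRel G.Adj
  G.adjMatrix ℝ

/-- Characteristic polynomial of the adjacency matrix. -/
noncomputable def cpoly {V : Type*} [Finite V] (G : SimpleGraph V) : Polynomial ℝ :=
  letI := Fintype.ofFinite V
  letI := Classical.decEq V
  (adjM G).charpoly

/-- `μ` is an eigenvalue of the adjacency matrix of `G`. -/
def IsEigval {V : Type*} [Finite V] (G : SimpleGraph V) (μ : ℝ) : Prop :=
  letI := Fintype.ofFinite V
  ∃ v : V → ℝ, v ≠ 0 ∧ (adjM G).mulVec v = μ • v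

/-- `μ` is the second largest (distinct) eigenvalue of `G`. -/
def IsSecondLargestEigval {V : Type*} [Finite V] (G : SimpleGraph V) (μ : ℝ) : Prop :=
  IsEigval G μ ∧ ∃ ν : ℝ, IsEigval G ν ∧ μ < ν ∧
    ∀ ρ : ℝ, IsEigval G ρ → ρ = ν ∨ ρ ≤ μ

/-- `μ` is the smallest eigenvalue of `G`. -/
def IsSmallestEigval {V : Type*} [Finite V] (G : SimpleGraph V) (μ : ℝ) : Prop :=
  IsEigval G μ ∧ ∀ ρ : ℝ, IsEigval G ρ → μ ≤ ρ

/-- `H` is a Ramanujan graph of degree `d`. -/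
def IsRamanujan {V : Type*} [Finite V] (H : SimpleGraph V) (d : ℕ) : Prop :=
  H.Connected ∧ H.IsRegularOfDegree d ∧
    ∀ μ : ℝ, IsEigval H μ → |μ| ≠ (d : ℝ) → |μ| ≤ 2 * Real.sqrt (d - 1)


set_option maxHeartbeats 1000000

section AuxRamanujanProof

variable {V : Type*}

def Meets (a b : Sym2 V) : Prop := ∃ x, x ∈ a ∧ x ∈ b

lemma sym2_eq_of_mem {a : Sym2 V} {x y : V} (hx : x ∈ a) (hy : y ∈ a) (hxy : x ≠ y) :
    a = s(x, y) := by
  induction a using Sym2.ind with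
  | _ p q =>
    rw [Sym2.mem_iff] at hx hy
    rcases hx with rfl | rfl <;> rcases hy with rfl | rfl <;> simp_all [Sym2.eq_iff]

lemma three_classify {a b c : Sym2 V}
    (hma : Meets a b) (hmb : Meets a c) (hmc : Meets b c) :
    (∃ w, w ∈ a ∧ w ∈ b ∧ w ∈ c) ∨
      (∃ x y z : V, x ≠ y ∧ x ≠ z ∧ y ≠ z ∧ a = s(x, y) ∧ b = s(x, z) ∧ c = s(y, z)) := by
  obtain ⟨x, hxa, hxb⟩ := hma
  obtain ⟨y, hya, hyc⟩ := hmb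
  obtain ⟨z, hzb, hzc⟩ := hmc
  by_cases hxy : x = y
  · exact Or.inl ⟨x, hxa, hxb, hxy ▸ hyc⟩
  by_cases hxz : x = z
  · exact Or.inl ⟨x, hxa, hxb, hxz ▸ hzc⟩
  by_cases hyz : y = z
  · exact Or.inl ⟨y, hya, hyz ▸ hzb, hyc⟩
  · exact Or.inr ⟨x, y, z, hxy, hxz, hyz, sym2_eq_of_mem hxa hya hxy,
      sym2_eq_of_mem hxb hzb hxz, sym2_eq_of_mem hyc hzc hyz⟩

lemma star4 [DecidableEq (Sym2 V)] {F : Finset (Sym2 V)} (hcard : 4 ≤ F.card)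
    (hd : ∀ a ∈ F, ¬a.IsDiag)
    (hint : ∀ a ∈ F, ∀ b ∈ F, a ≠ b → Meets a b) :
    ∃ w, ∀ a ∈ F, w ∈ a := by
  -- get three distinct elements
  have hpos : 0 < F.card := by omega
  obtain ⟨a, ha⟩ := Finset.card_pos.mp hpos
  have h1 : 1 ≤ (F.erase a).card := by rw [Finset.card_erase_of_mem ha]; omega
  obtain ⟨b, hb⟩ := Finset.card_pos.mp h1
  have hbF : b ∈ F := Finset.mem_of_mem_erase hb
  have hba : b ≠ a := Finset.ne_of_mem_erase hb
  have h2 : 1 ≤ ((F.erase a).erase b).card := by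
    rw [Finset.card_erase_of_mem hb, Finset.card_erase_of_mem ha]; omega
  obtain ⟨c, hc⟩ := Finset.card_pos.mp h2
  have hcF : c ∈ F := Finset.mem_of_mem_erase (Finset.mem_of_mem_erase hc)
  have hcb : c ≠ b := Finset.ne_of_mem_erase hc
  have hca : c ≠ a := Finset.ne_of_mem_erase (Finset.mem_of_mem_erase hc)
  rcases three_classify (hint a ha b hbF (Ne.symm hba)) (hint a ha c hcF (Ne.symm hca))
      (hint b hbF c hcF (Ne.symm hcb)) with ⟨w, hwa, hwb, hwc⟩ | ⟨x, y, z, hxy, hxz, hyz, hae, hbe, hce⟩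
  · -- star case
    refine ⟨w, fun d hdF => ?_⟩
    by_contra hwd
    have hda : d ≠ a := fun h => hwd (h ▸ hwa)
    have hdb : d ≠ b := fun h => hwd (h ▸ hwb)
    have hdc : d ≠ c := fun h => hwd (h ▸ hwc)
    obtain ⟨ta, hsa⟩ : ∃ t, s(w, t) = a := ⟨_, Sym2.other_spec hwa⟩
    obtain ⟨tb, hsb⟩ : ∃ t, s(w, t) = b := ⟨_, Sym2.other_spec hwb⟩
    obtain ⟨tc, hsc⟩ : ∃ t, s(w, t) = c := ⟨_, Sym2.other_spec hwc⟩
    have htab : ta ≠ tb := fun h => hba.symm (by rw [← hsa, ← hsb, h])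
    have htacc : ta ≠ tc := fun h => hca.symm (by rw [← hsa, ← hsc, h])
    have htbc : tb ≠ tc := fun h => hcb.symm (by rw [← hsb, ← hsc, h])
    have hmem : ∀ (t : V) (e : Sym2 V), e ∈ F → s(w, t) = e → e ≠ d → t ∈ d := by
      intro t e heF hse hed
      obtain ⟨m, hmd, hme⟩ := hint d hdF e heF (Ne.symm hed)
      rw [← hse, Sym2.mem_iff] at hme
      rcases hme with rfl | rfl
      · exact absurd hmd hwd
      · exact hmd
    have h1 := hmem ta a ha hsa hda.symm
    have h2 := hmem tb b hbF hsb hdb.symm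
    have h3 := hmem tc c hcF hsc hdc.symm
    induction d using Sym2.ind with
    | _ p q =>
      rw [Sym2.mem_iff] at h1 h2 h3
      rcases h1 with rfl | rfl <;> rcases h2 with h2 | h2 <;> rcases h3 with h3 | h3 <;>
        simp_all
  · -- triangle case: find a 4th element, contradiction
    exfalso
    have h3 : 1 ≤ (((F.erase a).erase b).erase c).card := by
      rw [Finset.card_erase_of_mem hc, Finset.card_erase_of_mem hb,
        Finset.card_erase_of_mem ha]; omega
    obtain ⟨d, hd'⟩ := Finset.card_pos.mp h3
    have hdF : d ∈ F := Finset.mem_of_mem_erase (Finset.mem_of_mem_erase (Finset.mem_of_mem_erase hd'))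
    have hdc : d ≠ c := Finset.ne_of_mem_erase hd'
    have hdb : d ≠ b := Finset.ne_of_mem_erase (Finset.mem_of_mem_erase hd')
    have hda : d ≠ a := Finset.ne_of_mem_erase (Finset.mem_of_mem_erase (Finset.mem_of_mem_erase hd'))
    subst hae hbe hce
    induction d using Sym2.ind with
    | _ p q =>
      have hpq : p ≠ q := by
        intro h; exact hd _ hdF (by simp [h])
      have hp : p = x ∨ p = y ∨ p = z := by
        by_contra hcon
        push_neg at hcon
        obtain ⟨hrx, hry, hrz⟩ := hcon
        obtain ⟨ma, hmad, hmaa⟩ := hint _ hdF _ ha hda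
        obtain ⟨mb, hmbd, hmbb⟩ := hint _ hdF _ hbF hdb
        obtain ⟨mc, hmcd, hmcc⟩ := hint _ hdF _ hcF hdc
        rw [Sym2.mem_iff] at hmad hmaa hmbd hmbb hmcd hmcc
        have ha' : q = x ∨ q = y := by
          rcases hmaa with rfl | rfl <;> rcases hmad with h | h
          · exact absurd h.symm hrx
          · exact Or.inl h.symm
          · exact absurd h.symm hry
          · exact Or.inr h.symm
        have hb' : q = x ∨ q = z := by
          rcases hmbb with rfl | rfl <;> rcases hmbd with h | h
          · exact absurd h.symm hrx
          · exact Or.inl h.symm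
          · exact absurd h.symm hrz
          · exact Or.inr h.symm
        have hc' : q = y ∨ q = z := by
          rcases hmcc with rfl | rfl <;> rcases hmcd with h | h
          · exact absurd h.symm hry
          · exact Or.inl h.symm
          · exact absurd h.symm hrz
          · exact Or.inr h.symm
        rcases ha' with h1 | h1
        · rcases hc' with h2 | h2
          · exact hxy (h1.symm.trans h2)
          · exact hxz (h1.symm.trans h2)
        · rcases hb' with h2 | h2
          · exact hxy (h2.symm.trans h1)
          · exact hyz (h1.symm.trans h2)
      have hq : q = x ∨ q = y ∨ q = z := by
        by_contra hcon
        push_neg at hcon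
        obtain ⟨hrx, hry, hrz⟩ := hcon
        obtain ⟨ma, hmad, hmaa⟩ := hint _ hdF _ ha hda
        obtain ⟨mb, hmbd, hmbb⟩ := hint _ hdF _ hbF hdb
        obtain ⟨mc, hmcd, hmcc⟩ := hint _ hdF _ hcF hdc
        rw [Sym2.mem_iff] at hmad hmaa hmbd hmbb hmcd hmcc
        have ha' : p = x ∨ p = y := by
          rcases hmaa with rfl | rfl <;> rcases hmad with h | h
          · exact Or.inl h.symm
          · exact absurd h.symm hrx
          · exact Or.inr h.symm
          · exact absurd h.symm hry
        have hb' : p = x ∨ p = z := by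
          rcases hmbb with rfl | rfl <;> rcases hmbd with h | h
          · exact Or.inl h.symm
          · exact absurd h.symm hrx
          · exact Or.inr h.symm
          · exact absurd h.symm hrz
        have hc' : p = y ∨ p = z := by
          rcases hmcc with rfl | rfl <;> rcases hmcd with h | h
          · exact Or.inl h.symm
          · exact absurd h.symm hry
          · exact Or.inr h.symm
          · exact absurd h.symm hrz
        rcases ha' with h1 | h1
        · rcases hc' with h2 | h2
          · exact hxy (h1.symm.trans h2)
          · exact hxz (h1.symm.trans h2)
        · rcases hb' with h2 | h2
          · exact hxy (h2.symm.trans h1)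
          · exact hyz (h1.symm.trans h2)
      have hfin : ∀ r r' : V, r = x ∨ r = y ∨ r = z → r' = x ∨ r' = y ∨ r' = z →
          r ≠ r' → s(r, r') = s(x,y) ∨ s(r, r') = s(x,z) ∨ s(r, r') = s(y,z) := by
        intro r r' h1 h2 hne
        rcases h1 with rfl | rfl | rfl <;> rcases h2 with rfl | rfl | rfl <;>
          simp_all [Sym2.eq_iff] <;> tauto
      rcases hfin p q hp hq hpq with h | h | h
      · exact hda h
      · exact hdb h
      · exact hdc h

lemma walk_closed {V : Type*} {G : SimpleGraph V} {S : Set V}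
    (hS : ∀ p q, G.Adj p q → p ∈ S → q ∈ S)
    {x u : V} (w : G.Walk x u) (hx : x ∈ S) : u ∈ S := by
  induction w with
  | nil => exact hx
  | cons h _ ih => exact ih (hS _ _ h hx)

lemma core {V : Type*} [Fintype V] {G : SimpleGraph V} {k : ℕ}
    (hn : 5 ≤ Fintype.card V) (hk : 2 ≤ k) (hconn : G.Connected)
    (hreg : G.IsRegularOfDegree k) {e f g : Sym2 V}
    (he : e ∈ G.edgeSet) (hf : f ∈ G.edgeSet) (hg : g ∈ G.edgeSet)
    (hef : ¬ Meets e f) (heg : ¬ Meets e g) (hfg : f ≠ g) :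
    ∃ a b : Sym2 V, a ∈ G.edgeSet ∧ b ∈ G.edgeSet ∧ ¬ Meets a b ∧
      a ≠ e ∧ a ≠ f ∧ a ≠ g ∧ b ≠ e ∧ b ≠ f ∧ b ≠ g := by
  classical
  -- basic counting
  have hirrel : ∀ (v : V) (i1 i2 : Fintype (G.neighborSet v)),
      @SimpleGraph.degree V G v i1 = @SimpleGraph.degree V G v i2 := fun v i1 i2 => by
    rw [Subsingleton.elim i1 i2]
  have hdeg : ∀ v : V, G.degree v = k := fun v => (hirrel v _ _).trans (hreg v)
  have key : ∀ I : (v : V) → Fintype (G.neighborSet v),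
      ∑ v : V, @SimpleGraph.degree V G v (I v) = Fintype.card V * k := by
    intro I
    rw [Finset.sum_congr rfl (fun v _ => (hirrel v (I v) _).trans (hreg v)),
      Finset.sum_const, Finset.card_univ, smul_eq_mul]
  have h2m : 2 * G.edgeFinset.card = Fintype.card V * k := by
    have h := G.sum_degrees_eq_twice_card_edges
    exact Eq.trans h.symm (by convert key (fun v => Subtype.fintype _))
  have h5k : 5 * k ≤ Fintype.card V * k := Nat.mul_le_mul_right k hn
  have hm : 2 * k + 1 ≤ G.edgeFinset.card := by omega
  -- incidence bound
  have hIncCard : ∀ w : V, (G.incidenceFinset w).card = k := fun w => by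
    rw [SimpleGraph.card_incidenceFinset_eq_degree]; exact hdeg w
  have hIncBound : ∀ (F : Finset (Sym2 V)) (w : V), (∀ a ∈ F, a ∈ G.edgeSet) →
      (∀ a ∈ F, w ∈ a) → F.card ≤ k := by
    intro F w h1 h2
    have hsub : F ⊆ G.incidenceFinset w := by
      intro a haF
      rw [SimpleGraph.mem_incidenceFinset]
      exact ⟨h1 a haF, h2 a haF⟩
    calc F.card ≤ (G.incidenceFinset w).card := Finset.card_le_card hsub
      _ = k := hIncCard w
  -- e is nonempty, get endpoints
  induction e using Sym2.ind with
  | _ u v =>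
  have hadj : G.Adj u v := (SimpleGraph.mem_edgeSet G).mp he
  have huv : u ≠ v := hadj.ne
  have hue : u ∈ s(u, v) := by simp
  have hve : v ∈ s(u, v) := by simp
  have hef' : s(u,v) ≠ f := fun h => hef ⟨u, hue, h ▸ hue⟩
  have heg' : s(u,v) ≠ g := fun h => heg ⟨u, hue, h ▸ hue⟩
  set E' : Finset (Sym2 V) := G.edgeFinset \ {s(u,v), f, g} with hE'def
  have hsub3 : ({s(u,v), f, g} : Finset (Sym2 V)) ⊆ G.edgeFinset := by
    intro x hx
    simp only [Finset.mem_insert, Finset.mem_singleton] at hx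
    rcases hx with rfl | rfl | rfl <;> simpa [SimpleGraph.mem_edgeFinset]
  have hcard3 : ({s(u,v), f, g} : Finset (Sym2 V)).card = 3 := by
    rw [Finset.card_insert_of_notMem (by simp [hef', heg']),
      Finset.card_insert_of_notMem (by simp [hfg]), Finset.card_singleton]
  have hcardE' : E'.card = G.edgeFinset.card - 3 := by
    rw [hE'def, Finset.card_sdiff_of_subset hsub3, hcard3]
  have hmemE' : ∀ a ∈ E', a ∈ G.edgeSet ∧ a ≠ s(u,v) ∧ a ≠ f ∧ a ≠ g := by
    intro a ha
    rw [hE'def, Finset.mem_sdiff] at ha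
    simp only [Finset.mem_insert, Finset.mem_singleton, not_or] at ha
    exact ⟨(SimpleGraph.mem_edgeFinset).mp ha.1, ha.2.1, ha.2.2.1, ha.2.2.2⟩
  by_contra hno
  have hint : ∀ a ∈ E', ∀ b ∈ E', a ≠ b → Meets a b := by
    intro a haE b hbE hab
    by_contra hM
    obtain ⟨ha1, ha2, ha3, ha4⟩ := hmemE' a haE
    obtain ⟨hb1, hb2, hb3, hb4⟩ := hmemE' b hbE
    exact hno ⟨a, b, ha1, hb1, hM, ha2, ha3, ha4, hb2, hb3, hb4⟩
  have hndiag : ∀ a ∈ E', ¬ a.IsDiag := fun a ha =>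
    G.not_isDiag_of_mem_edgeSet (hmemE' a ha).1
  rcases Nat.lt_or_ge E'.card 4 with hlt | h4
  swap
  · -- large intersecting family: a star, contradiction by counting
    obtain ⟨w, hw⟩ := star4 h4 hndiag hint
    have hb := hIncBound E' w (fun a ha => (hmemE' a ha).1) hw
    omega
  -- now k = 2 and few edges
  have hk2 : k = 2 := by omega
  subst hk2
  have hnm : Fintype.card V = G.edgeFinset.card := by omega
  have hNcard : ∀ p : V, (G.neighborFinset p).card = 2 := fun p => hdeg p
  rcases (by omega : G.edgeFinset.card = 5 ∨ G.edgeFinset.card = 6) with h5 | h6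
  · -- n = 5 : pentagon case
    have hvN : v ∈ G.neighborFinset u := (G.mem_neighborFinset u v).mpr hadj
    obtain ⟨w1, hw1N, hw1v⟩ :=
      Finset.exists_mem_ne (by rw [hNcard u]; omega) v
    have hAuw1 : G.Adj u w1 := (G.mem_neighborFinset u w1).mp hw1N
    have huN : u ∈ G.neighborFinset v := (G.mem_neighborFinset v u).mpr hadj.symm
    obtain ⟨w2, hw2N, hw2u⟩ :=
      Finset.exists_mem_ne (by rw [hNcard v]; omega) u
    have hAvw2 : G.Adj v w2 := (G.mem_neighborFinset v w2).mp hw2N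
    have hua : u ∈ s(u, w1) := by simp
    have hvb : v ∈ s(v, w2) := by simp
    have ha'E' : s(u, w1) ∈ E' := by
      rw [hE'def, Finset.mem_sdiff]
      refine ⟨(SimpleGraph.mem_edgeFinset).mpr ((G.mem_edgeSet).mpr hAuw1), ?_⟩
      simp only [Finset.mem_insert, Finset.mem_singleton, not_or]
      refine ⟨fun h => hw1v (Sym2.congr_right.mp h), ?_, ?_⟩
      · exact fun h => hef ⟨u, hue, h ▸ hua⟩
      · exact fun h => heg ⟨u, hue, h ▸ hua⟩
    have hb'E' : s(v, w2) ∈ E' := by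
      rw [hE'def, Finset.mem_sdiff]
      refine ⟨(SimpleGraph.mem_edgeFinset).mpr ((G.mem_edgeSet).mpr hAvw2), ?_⟩
      simp only [Finset.mem_insert, Finset.mem_singleton, not_or]
      refine ⟨?_, ?_, ?_⟩
      · intro h
        rw [Sym2.eq_iff] at h
        rcases h with ⟨h1, _⟩ | ⟨_, h2⟩
        · exact huv h1.symm
        · exact hw2u h2
      · exact fun h => hef ⟨v, hve, h ▸ hvb⟩
      · exact fun h => heg ⟨v, hve, h ▸ hvb⟩
    have hab' : s(u, w1) ≠ s(v, w2) := by
      intro h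
      have : u ∈ s(v, w2) := h ▸ hua
      rw [Sym2.mem_iff] at this
      rcases this with h' | h'
      · exact huv h'
      · exact hw2u h'.symm
    obtain ⟨t, ht1, ht2⟩ := hint _ ha'E' _ hb'E' hab'
    rw [Sym2.mem_iff] at ht1 ht2
    have hww : w1 = w2 := by
      rcases ht1 with rfl | rfl
      · rcases ht2 with h' | h'
        · exact absurd h' huv
        · exact absurd h'.symm hw2u
      · rcases ht2 with h' | h'
        · exact absurd h' hw1v
        · exact h'
    have hw1u : w1 ≠ u := fun h => G.irrefl (h ▸ hAuw1)
    have hNw : G.neighborFinset w1 = {u, v} := by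
      refine (Finset.eq_of_subset_of_card_le ?_ ?_).symm
      · intro t' ht'
        simp only [Finset.mem_insert, Finset.mem_singleton] at ht'
        rw [G.mem_neighborFinset]
        rcases ht' with rfl | rfl
        · exact hAuw1.symm
        · exact (hww ▸ hAvw2).symm
      · rw [hNcard w1, Finset.card_insert_of_notMem (by simp [huv]), Finset.card_singleton]
    set T : Finset V := Finset.univ \ {u, v, w1} with hTdef
    have hTcard : T.card = 2 := by
      rw [hTdef, Finset.card_sdiff_of_subset (Finset.subset_univ _), Finset.card_univ]
      rw [Finset.card_insert_of_notMem (by simp [huv, Ne.symm hw1u]),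
        Finset.card_insert_of_notMem (by simp [Ne.symm hw1v]), Finset.card_singleton]
      omega
    obtain ⟨t1, t2, ht12, hT2⟩ := Finset.card_eq_two.mp hTcard
    have havoid : ∀ h' : Sym2 V, h' ∈ G.edgeSet → ¬ Meets s(u,v) h' → (∀ t', t' ∈ h' → t' ∈ T) := by
      intro h' hh' hMh t' ht'
      have htu : t' ≠ u := fun h => hMh ⟨u, hue, h ▸ ht'⟩
      have htv : t' ≠ v := fun h => hMh ⟨v, hve, h ▸ ht'⟩
      have htw : t' ≠ w1 := by
        intro h
        subst h
        obtain ⟨o, ho⟩ : ∃ o, s(t', o) = h' := ⟨_, Sym2.other_spec ht'⟩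
        have hAo : G.Adj t' o := (G.mem_edgeSet).mp (ho ▸ hh')
        have hoN : o ∈ G.neighborFinset t' := (G.mem_neighborFinset t' o).mpr hAo
        rw [hNw, Finset.mem_insert, Finset.mem_singleton] at hoN
        have hof : o ∈ h' := by rw [← ho]; simp
        rcases hoN with rfl | rfl
        · exact hMh ⟨o, hue, hof⟩
        · exact hMh ⟨o, hve, hof⟩
      rw [hTdef]
      simp [htu, htv, htw]
    have huniq : ∀ h' : Sym2 V, h' ∈ G.edgeSet → (∀ t', t' ∈ h' → t' ∈ T) → h' = s(t1, t2) := by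
      intro h' hh' hsub
      induction h' using Sym2.ind with
      | _ r1 r2 =>
        have hr12 : r1 ≠ r2 := ((G.mem_edgeSet).mp hh').ne
        have h1 := hsub r1 (by simp)
        have h2 := hsub r2 (by simp)
        rw [hT2, Finset.mem_insert, Finset.mem_singleton] at h1 h2
        rcases h1 with rfl | rfl <;> rcases h2 with rfl | rfl
        · exact absurd rfl hr12
        · rfl
        · exact Sym2.eq_swap
        · exact absurd rfl hr12
    have hfe : f = s(t1, t2) := huniq f hf (havoid f hf hef)
    have hge : g = s(t1, t2) := huniq g hg (havoid g hg heg)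
    exact hfg (hfe.trans hge.symm)
  · -- n = 6 : hexagon case
    have hE3 : E'.card = 3 := by omega
    obtain ⟨a, b, c, hab, hac, hbc, hE'3⟩ := Finset.card_eq_three.mp hE3
    have haE : a ∈ E' := by rw [hE'3]; simp
    have hbE : b ∈ E' := by rw [hE'3]; simp
    have hcE : c ∈ E' := by rw [hE'3]; simp
    rcases three_classify (hint a haE b hbE hab) (hint a haE c hcE hac)
        (hint b hbE c hcE hbc) with ⟨w, hwa, hwb, hwc⟩ |
        ⟨x, y, z, hxy, hxz, hyz, hae, hbe, hce⟩
    · have hb2 := hIncBound E' w (fun d hd => (hmemE' d hd).1) (by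
        intro d hd
        rw [hE'3, Finset.mem_insert, Finset.mem_insert, Finset.mem_singleton] at hd
        rcases hd with rfl | rfl | rfl
        · exact hwa
        · exact hwb
        · exact hwc)
      omega
    · -- triangle: contradicts connectivity
      have hAxy : G.Adj x y := (G.mem_edgeSet).mp (hae ▸ (hmemE' a haE).1)
      have hAxz : G.Adj x z := (G.mem_edgeSet).mp (hbe ▸ (hmemE' b hbE).1)
      have hAyz : G.Adj y z := (G.mem_edgeSet).mp (hce ▸ (hmemE' c hcE).1)
      have hNfun : ∀ p q r : V, q ≠ r → G.Adj p q → G.Adj p r →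
          G.neighborFinset p = {q, r} := by
        intro p q r hqr h1 h2
        refine (Finset.eq_of_subset_of_card_le ?_ ?_).symm
        · intro t' ht'
          simp only [Finset.mem_insert, Finset.mem_singleton] at ht'
          rw [G.mem_neighborFinset]
          rcases ht' with rfl | rfl
          · exact h1
          · exact h2
        · rw [hNcard p, Finset.card_insert_of_notMem (by simp [hqr]),
            Finset.card_singleton]
      have hNx := hNfun x y z hyz hAxy hAxz
      have hNy := hNfun y x z hxz hAxy.symm hAyz
      have hNz := hNfun z x y hxy hAxz.symm hAyz.symm
      set S : Set V := {x, y, z} with hSdef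
      have hS : ∀ p q, G.Adj p q → p ∈ S → q ∈ S := by
        intro p q hpq hp
        have hmem : ∀ p' q' r' : V, G.neighborFinset p' = {q', r'} → G.Adj p' q →
            q = q' ∨ q = r' := by
          intro p' q' r' hN hA
          have : q ∈ G.neighborFinset p' := (G.mem_neighborFinset p' q).mpr hA
          rw [hN, Finset.mem_insert, Finset.mem_singleton] at this
          exact this
        rw [hSdef] at hp ⊢
        simp only [Set.mem_insert_iff, Set.mem_singleton_iff] at hp ⊢
        rcases hp with rfl | rfl | rfl
        · rcases hmem p y z hNx hpq with rfl | rfl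
          · right; left; rfl
          · right; right; rfl
        · rcases hmem p x z hNy hpq with rfl | rfl
          · left; rfl
          · right; right; rfl
        · rcases hmem p x y hNz hpq with rfl | rfl
          · left; rfl
          · right; left; rfl
      have heE' : s(u, v) ∉ E' := by rw [hE'def]; simp
      have huS : u ∉ S := by
        intro huS'
        have hcontra : ∀ p' q' r' : V, G.neighborFinset p' = {q', r'} →
            s(p', q') ∈ E' → s(p', r') ∈ E' → u = p' → False := by
          intro p' q' r' hN h1 h2 hup
          subst hup
          have : v ∈ G.neighborFinset u := (G.mem_neighborFinset u v).mpr hadj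
          rw [hN, Finset.mem_insert, Finset.mem_singleton] at this
          rcases this with rfl | rfl
          · exact heE' h1
          · exact heE' h2
        rw [hSdef] at huS'
        simp only [Set.mem_insert_iff, Set.mem_singleton_iff] at huS'
        have haE2 : s(x, y) ∈ E' := hae ▸ haE
        have hbE2 : s(x, z) ∈ E' := hbe ▸ hbE
        have hcE2 : s(y, z) ∈ E' := hce ▸ hcE
        rcases huS' with rfl | rfl | rfl
        · exact hcontra u y z hNx haE2 hbE2 rfl
        · exact hcontra u x z hNy (Sym2.eq_swap ▸ haE2) hcE2 rfl
        · exact hcontra u x y hNz (Sym2.eq_swap ▸ hbE2) (Sym2.eq_swap ▸ hcE2) rfl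
      have hxS : x ∈ S := by rw [hSdef]; simp
      obtain ⟨wk⟩ := hconn.preconnected x u
      exact huS (walk_closed hS wk hxS)

lemma sym2_exists_mem {V : Type*} (a : Sym2 V) : ∃ x, x ∈ a := by
  induction a using Sym2.ind with
  | _ x y => exact ⟨x, by simp⟩

lemma exists_disj {V : Type*} [Fintype V] {G : SimpleGraph V} {k : ℕ}
    (hn : 5 ≤ Fintype.card V) (hk : 2 ≤ k) (hreg : G.IsRegularOfDegree k) :
    ∃ a b : Sym2 V, a ∈ G.edgeSet ∧ b ∈ G.edgeSet ∧ ¬ Meets a b := by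
  classical
  have hirrel : ∀ (v : V) (i1 i2 : Fintype (G.neighborSet v)),
      @SimpleGraph.degree V G v i1 = @SimpleGraph.degree V G v i2 := fun v i1 i2 => by
    rw [Subsingleton.elim i1 i2]
  have hdeg : ∀ v : V, G.degree v = k := fun v => (hirrel v _ _).trans (hreg v)
  have key : ∀ I : (v : V) → Fintype (G.neighborSet v),
      ∑ v : V, @SimpleGraph.degree V G v (I v) = Fintype.card V * k := by
    intro I
    rw [Finset.sum_congr rfl (fun v _ => (hirrel v (I v) _).trans (hreg v)),
      Finset.sum_const, Finset.card_univ, smul_eq_mul]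
  have h2m : 2 * G.edgeFinset.card = Fintype.card V * k := by
    have h := G.sum_degrees_eq_twice_card_edges
    exact Eq.trans h.symm (by convert key (fun v => Subtype.fintype _))
  have h5k : 5 * k ≤ Fintype.card V * k := Nat.mul_le_mul_right k hn
  have hm : 2 * k + 1 ≤ G.edgeFinset.card := by omega
  have hne : Nonempty V := Fintype.card_pos_iff.mp (by omega)
  obtain ⟨u⟩ := hne
  have hNu : (G.neighborFinset u).card = k := hdeg u
  obtain ⟨v, hv⟩ := Finset.card_pos.mp (show 0 < (G.neighborFinset u).card by omega)
  have hadj : G.Adj u v := (G.mem_neighborFinset u v).mp hv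
  set bad : Finset (Sym2 V) := G.incidenceFinset u ∪ G.incidenceFinset v with hbaddef
  have hIncCard : ∀ w : V, (G.incidenceFinset w).card = k := fun w => by
    rw [SimpleGraph.card_incidenceFinset_eq_degree]; exact hdeg w
  have hbadcard : bad.card ≤ 2 * k := by
    calc bad.card ≤ (G.incidenceFinset u).card + (G.incidenceFinset v).card :=
          Finset.card_union_le _ _
      _ = 2 * k := by rw [hIncCard u, hIncCard v]; ring
  have hbadsub : bad ⊆ G.edgeFinset := by
    intro x hx
    rw [hbaddef, Finset.mem_union] at hx
    rcases hx with hx | hx <;>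
      rw [SimpleGraph.mem_incidenceFinset] at hx <;>
      exact (SimpleGraph.mem_edgeFinset).mpr (G.incidenceSet_subset _ hx)
  have hpos : 0 < (G.edgeFinset \ bad).card := by
    rw [Finset.card_sdiff_of_subset hbadsub]
    omega
  obtain ⟨b, hb⟩ := Finset.card_pos.mp hpos
  rw [Finset.mem_sdiff] at hb
  refine ⟨s(u, v), b, (G.mem_edgeSet).mpr hadj, (SimpleGraph.mem_edgeFinset).mp hb.1, ?_⟩
  rintro ⟨t, ht1, ht2⟩
  rw [Sym2.mem_iff] at ht1
  apply hb.2
  rw [hbaddef, Finset.mem_union]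
  rcases ht1 with rfl | rfl
  · exact Or.inl ((SimpleGraph.mem_incidenceFinset _ _ _).mpr
      ⟨(SimpleGraph.mem_edgeFinset).mp hb.1, ht2⟩)
  · exact Or.inr ((SimpleGraph.mem_incidenceFinset _ _ _).mpr
      ⟨(SimpleGraph.mem_edgeFinset).mp hb.1, ht2⟩)

variable {V : Type*} {G : SimpleGraph V}

lemma Hadj_iff {e f : G.edgeSet} :
    (G.lineGraph)ᶜ.Adj e f ↔ (e : Sym2 V) ≠ (f : Sym2 V) ∧ ¬ Meets (e : Sym2 V) (f : Sym2 V) := by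
  rw [compl_adj, lineGraph_adj_iff_exists]
  constructor
  · rintro ⟨h1, h2⟩
    exact ⟨fun hc => h1 (Subtype.ext hc), fun ⟨x, hx1, hx2⟩ => h2 ⟨h1, x, hx1, hx2⟩⟩
  · rintro ⟨h1, h2⟩
    exact ⟨fun hc => h1 (congrArg Subtype.val hc), fun ⟨_, x, hx1, hx2⟩ => h2 ⟨x, hx1, hx2⟩⟩

lemma Radj_iff {e f g h : G.edgeSet} (hef : s(e,f) ∈ (G.lineGraph)ᶜ.edgeSet)
    (hgh : s(g,h) ∈ (G.lineGraph)ᶜ.edgeSet) :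
    (RGraph G).Adj ⟨s(e,f), hef⟩ ⟨s(g,h), hgh⟩ ↔ e ≠ g ∧ e ≠ h ∧ f ≠ g ∧ f ≠ h := by
  show ((G.lineGraph)ᶜ.lineGraph)ᶜ.Adj _ _ ↔ _
  rw [compl_adj, lineGraph_adj_iff_exists]
  constructor
  · rintro ⟨h1, h2⟩
    refine ⟨?_, ?_, ?_, ?_⟩ <;> intro hh <;> subst hh
    · exact h2 ⟨h1, e, by simp, by simp⟩
    · exact h2 ⟨h1, e, by simp, by simp⟩
    · exact h2 ⟨h1, f, by simp, by simp⟩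
    · exact h2 ⟨h1, f, by simp, by simp⟩
  · rintro ⟨h1, h2, h3, h4⟩
    have hne : s(e,f) ≠ s(g,h) := by
      intro hc
      rw [Sym2.eq_iff] at hc
      rcases hc with ⟨rfl, rfl⟩ | ⟨rfl, rfl⟩
      · exact h1 rfl
      · exact h2 rfl
    refine ⟨fun hc => hne (Subtype.ext_iff.mp hc), ?_⟩
    rintro ⟨-, x, hx1, hx2⟩
    rw [Sym2.mem_iff] at hx1 hx2
    rcases hx1 with rfl | rfl <;> rcases hx2 with rfl | rfl <;> simp_all


lemma reach_share {V : Type*} [Fintype V] {G : SimpleGraph V} {k : ℕ}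
    (hn : 5 ≤ Fintype.card V) (hk : 2 ≤ k) (hconn : G.Connected)
    (hreg : G.IsRegularOfDegree k)
    (e f h : G.edgeSet) (hef : (G.lineGraph)ᶜ.Adj e f) (heh : (G.lineGraph)ᶜ.Adj e h)
    (hfh : f ≠ h)
    (hef' : s(e,f) ∈ (G.lineGraph)ᶜ.edgeSet) (heh' : s(e,h) ∈ (G.lineGraph)ᶜ.edgeSet) :
    (RGraph G).Reachable ⟨s(e,f), hef'⟩ ⟨s(e,h), heh'⟩ := by
  obtain ⟨hef1, hef2⟩ := Hadj_iff.mp hef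
  obtain ⟨heh1, heh2⟩ := Hadj_iff.mp heh
  have hfh' : (f : Sym2 V) ≠ (h : Sym2 V) := fun hc => hfh (Subtype.ext hc)
  obtain ⟨a, b, ha, hb, hM, hae, haf, hah, hbe, hbf, hbh⟩ :=
    core hn hk hconn hreg e.2 f.2 h.2 hef2 heh2 hfh'
  have hab : a ≠ b := by
    intro hc
    obtain ⟨x, hx⟩ := sym2_exists_mem a
    exact hM ⟨x, hx, hc ▸ hx⟩
  have hHab : (G.lineGraph)ᶜ.Adj ⟨a, ha⟩ ⟨b, hb⟩ := Hadj_iff.mpr ⟨hab, hM⟩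
  have hR : s((⟨a, ha⟩ : G.edgeSet), (⟨b, hb⟩ : G.edgeSet)) ∈ (G.lineGraph)ᶜ.edgeSet :=
    (SimpleGraph.mem_edgeSet _).mpr hHab
  have hstep1 : (RGraph G).Adj ⟨s(e,f), hef'⟩ ⟨s(⟨a,ha⟩,⟨b,hb⟩), hR⟩ := by
    rw [Radj_iff]
    exact ⟨fun hc => hae (congrArg Subtype.val hc).symm,
      fun hc => hbe (congrArg Subtype.val hc).symm,
      fun hc => haf (congrArg Subtype.val hc).symm,
      fun hc => hbf (congrArg Subtype.val hc).symm⟩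
  have hstep2 : (RGraph G).Adj ⟨s(⟨a,ha⟩,⟨b,hb⟩), hR⟩ ⟨s(e,h), heh'⟩ := by
    rw [Radj_iff]
    exact ⟨fun hc => hae (congrArg Subtype.val hc),
      fun hc => hah (congrArg Subtype.val hc),
      fun hc => hbe (congrArg Subtype.val hc),
      fun hc => hbh (congrArg Subtype.val hc)⟩
  exact hstep1.reachable.trans hstep2.reachable

end AuxRamanujanProof

theorem stmt12 {V : Type*} [Fintype V] (G : SimpleGraph V) (k : ℕ)
    (hn : 5 ≤ Fintype.card V) (hk : 2 ≤ k) (hconn : G.Connected)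
    (hreg : G.IsRegularOfDegree k) :
    (RGraph G).Connected := by
  rw [SimpleGraph.connected_iff]
  constructor
  · -- preconnected
    intro P Q
    obtain ⟨p, hp⟩ := P
    obtain ⟨q, hq⟩ := Q
    revert hp hq
    induction p using Sym2.ind with
    | _ e f =>
    induction q using Sym2.ind with
    | _ g h' =>
    intro hp hq
    have hef : (G.lineGraph)ᶜ.Adj e f := (SimpleGraph.mem_edgeSet _).mp hp
    have hgh : (G.lineGraph)ᶜ.Adj g h' := (SimpleGraph.mem_edgeSet _).mp hq
    classical
    by_cases h1 : e = g
    · subst h1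
      by_cases h2 : f = h'
      · subst h2
        exact Reachable.refl _
      · exact reach_share hn hk hconn hreg e f h' hef hgh h2 hp hq
    · by_cases h2 : e = h'
      · subst h2
        by_cases h3 : f = g
        · subst h3
          have hveq : (⟨s(e,f), hp⟩ : (G.lineGraph)ᶜ.edgeSet) = ⟨s(f,e), hq⟩ :=
            Subtype.ext Sym2.eq_swap
          rw [hveq]
        · have hq2 : s(e, g) ∈ (G.lineGraph)ᶜ.edgeSet :=
            (SimpleGraph.mem_edgeSet _).mpr hgh.symm
          have hveq : (⟨s(g,e), hq⟩ : (G.lineGraph)ᶜ.edgeSet) = ⟨s(e,g), hq2⟩ :=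
            Subtype.ext Sym2.eq_swap
          rw [hveq]
          exact reach_share hn hk hconn hreg e f g hef hgh.symm h3 hp hq2
      · by_cases h3 : f = g
        · subst h3
          have hp2 : s(f, e) ∈ (G.lineGraph)ᶜ.edgeSet :=
            (SimpleGraph.mem_edgeSet _).mpr hef.symm
          have hveq : (⟨s(e,f), hp⟩ : (G.lineGraph)ᶜ.edgeSet) = ⟨s(f,e), hp2⟩ :=
            Subtype.ext Sym2.eq_swap
          rw [hveq]
          exact reach_share hn hk hconn hreg f e h' hef.symm hgh h2 hp2 hq
        · by_cases h4 : f = h'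
          · subst h4
            have hp2 : s(f, e) ∈ (G.lineGraph)ᶜ.edgeSet :=
              (SimpleGraph.mem_edgeSet _).mpr hef.symm
            have hq2 : s(f, g) ∈ (G.lineGraph)ᶜ.edgeSet :=
              (SimpleGraph.mem_edgeSet _).mpr hgh.symm
            have hveq1 : (⟨s(e,f), hp⟩ : (G.lineGraph)ᶜ.edgeSet) = ⟨s(f,e), hp2⟩ :=
              Subtype.ext Sym2.eq_swap
            have hveq2 : (⟨s(g,f), hq⟩ : (G.lineGraph)ᶜ.edgeSet) = ⟨s(f,g), hq2⟩ :=
              Subtype.ext Sym2.eq_swap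
            rw [hveq1, hveq2]
            exact reach_share hn hk hconn hreg f e g hef.symm hgh.symm h1 hp2 hq2
          · have : (RGraph G).Adj ⟨s(e,f), hp⟩ ⟨s(g,h'), hq⟩ :=
              (Radj_iff hp hq).mpr ⟨h1, h2, h3, h4⟩
            exact this.reachable
  · -- nonempty
    obtain ⟨a, b, ha, hb, hM⟩ := exists_disj hn hk hreg
    have hab : a ≠ b := by
      intro hc
      obtain ⟨x, hx⟩ := sym2_exists_mem a
      exact hM ⟨x, hx, hc ▸ hx⟩
    exact ⟨⟨s((⟨a, ha⟩ : G.edgeSet), (⟨b, hb⟩ : G.edgeSet)),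
      (SimpleGraph.mem_edgeSet _).mpr (Hadj_iff.mpr ⟨hab, hM⟩)⟩⟩
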